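/- Let T ∈ ℂ^{N3×n3} have full column rank and let U ∈ ℂ^{n1×r×N3}, V ∈ ℂ^{n2×r×N3} be the singular tensors of the skinny t-SVD of T(X) for some X ∈ ℂ^{n1×n2×n3} of tubal rank r in the transform domain. If max_i ‖U^H ⋆ ξ_i‖_F ≤ √(μ r N3 / n1) and max_j ‖V^H ⋆ ξ_j‖_F ≤ √(μ r N3 / n2), then ‖(U ⋆ V^H) ×₃ T^H‖_{∞,2} ≤ ‖T‖ · √(μ r (n1+n2) N3 / (n1 n2)), where ‖T‖ is the matrix spectral norm of T. -/

import Mathlib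

namespace TC

open scoped BigOperators ComplexConjugate
open Matrix

/-- A third-order complex tensor. -/
abbrev Tensor (n1 n2 n3 : ℕ) := Fin n1 → Fin n2 → Fin n3 → ℂ

/-- The `k`-th frontal slice of a tensor. -/
def slice {n1 n2 n3 : ℕ} (A : Tensor n1 n2 n3) (k : Fin n3) : Matrix (Fin n1) (Fin n2) ℂ :=
  Matrix.of fun i j => A i j k

/-- The natural tensor-tensor product: slice-wise matrix multiplication. -/
noncomputable def tprod {n1 n2 l n3 : ℕ} (A : Tensor n1 n2 n3) (B : Tensor n2 l n3) : Tensor n1 l n3 :=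
  fun i j k => ∑ s, A i s k * B s j k

/-- Slice-wise conjugate transpose. -/
noncomputable def hconj {n1 n2 n3 : ℕ} (A : Tensor n1 n2 n3) : Tensor n2 n1 n3 :=
  fun i j k => (starRingEnd ℂ) (A j i k)

/-- Mode-3 product: apply the matrix `T` to every mode-3 fiber. -/
noncomputable def mode3 {n1 n2 m n : ℕ} (T : Matrix (Fin m) (Fin n) ℂ) (A : Tensor n1 n2 n) :
    Tensor n1 n2 m :=
  fun i j k => ∑ s, T k s * A i j s

/-- Frobenius norm of a tensor. -/
noncomputable def frobNorm {n1 n2 n3 : ℕ} (A : Tensor n1 n2 n3) : ℝ :=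
  Real.sqrt (∑ i, ∑ j, ∑ k, ‖A i j k‖ ^ 2)

/-- Entrywise maximum modulus of a tensor. -/
noncomputable def infNorm {n1 n2 n3 : ℕ} (A : Tensor n1 n2 n3) : ℝ :=
  ⨆ i, ⨆ j, ⨆ k, ‖A i j k‖

/-- `‖A‖_{1↦2}`: largest Frobenius norm of a lateral slice (column). -/
noncomputable def norm1to2 {n1 n2 n3 : ℕ} (A : Tensor n1 n2 n3) : ℝ :=
  ⨆ j, Real.sqrt (∑ i, ∑ k, ‖A i j k‖ ^ 2)

/-- `‖A‖_{2↦∞}`: largest Frobenius norm of a horizontal slice (row). -/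
noncomputable def norm2toInf {n1 n2 n3 : ℕ} (A : Tensor n1 n2 n3) : ℝ :=
  ⨆ i, Real.sqrt (∑ j, ∑ k, ‖A i j k‖ ^ 2)

/-- `‖A‖_{∞,2}`. -/
noncomputable def normInf2 {n1 n2 n3 : ℕ} (A : Tensor n1 n2 n3) : ℝ :=
  max (norm1to2 A) (norm2toInf A)

/-- Singular values of a complex matrix: square roots of the eigenvalues of `Mᴴ * M`. -/
noncomputable def singVals {m n : ℕ} (M : Matrix (Fin m) (Fin n) ℂ) : Fin n → ℝ :=
  fun i => Real.sqrt ((Matrix.isHermitian_conjTranspose_mul_self M).eigenvalues i)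

/-- Matrix spectral norm: the largest singular value. -/
noncomputable def specNormMat {m n : ℕ} (M : Matrix (Fin m) (Fin n) ℂ) : ℝ :=
  ⨆ i, singVals M i

/-- Matrix nuclear norm: sum of the singular values. -/
noncomputable def nucNormMat {m n : ℕ} (M : Matrix (Fin m) (Fin n) ℂ) : ℝ :=
  ∑ i, singVals M i

/-- Tensor spectral norm: the maximum singular value over all frontal slices. -/
noncomputable def tSpecNorm {n1 n2 n3 : ℕ} (A : Tensor n1 n2 n3) : ℝ :=
  ⨆ k, specNormMat (slice A k)

/-- Tensor nuclear norm: the sum of all singular values of all frontal slices. -/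
noncomputable def tNucNorm {n1 n2 n3 : ℕ} (A : Tensor n1 n2 n3) : ℝ :=
  ∑ k, nucNormMat (slice A k)

/-- Smallest singular value. -/
noncomputable def sigmaMin {m n : ℕ} (M : Matrix (Fin m) (Fin n) ℂ) : ℝ :=
  ⨅ i, singVals M i

/-- Condition number `κ(T) = σ_max(T) / σ_min(T)`. -/
noncomputable def kappa {m n : ℕ} (M : Matrix (Fin m) (Fin n) ℂ) : ℝ :=
  specNormMat M / sigmaMin M

/-- Entrywise maximum modulus of a matrix. -/
noncomputable def matInfNorm {m n : ℕ} (M : Matrix (Fin m) (Fin n) ℂ) : ℝ :=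
  ⨆ i, ⨆ j, ‖M i j‖

/-- `‖M‖_{1↦2}`: largest `ℓ2` norm of the columns of `M`. -/
noncomputable def col2Norm {m n : ℕ} (M : Matrix (Fin m) (Fin n) ℂ) : ℝ :=
  ⨆ j, Real.sqrt (∑ i, ‖M i j‖ ^ 2)

/-- Moore–Penrose pseudo-inverse of a matrix of full column rank. -/
noncomputable def pinv {N3 n3 : ℕ} (T : Matrix (Fin N3) (Fin n3) ℂ) :
    Matrix (Fin n3) (Fin N3) ℂ :=
  (Tᴴ * T)⁻¹ * Tᴴ

/-- `ρ(T) = N3 · max(‖T‖_∞², ‖T†‖_∞²)`. -/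
noncomputable def rho {N3 n3 : ℕ} (T : Matrix (Fin N3) (Fin n3) ℂ) : ℝ :=
  (N3 : ℝ) * max (matInfNorm T ^ 2) (matInfNorm (pinv T) ^ 2)

/-- `T` has full column rank. -/
def FullColRank {N3 n3 : ℕ} (T : Matrix (Fin N3) (Fin n3) ℂ) : Prop := T.rank = n3

/-- The sampling operator `S_Ω`. -/
noncomputable def sampleOp {n1 n2 n3 : ℕ} (Ω : Finset (Fin n1 × Fin n2 × Fin n3)) (A : Tensor n1 n2 n3) :
    Tensor n1 n2 n3 :=
  fun i j k => if (i, j, k) ∈ Ω then A i j k else 0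

open Classical in
/-- The probability, under Bernoulli(p) sampling of each index independently, that the
random sampled index set satisfies the event `E`. -/
noncomputable def berProb {ι : Type*} [Fintype ι] (p : ℝ) (E : Finset ι → Prop) : ℝ :=
  ∑ Ω ∈ (Finset.univ : Finset ι).powerset,
    if E Ω then p ^ Ω.card * (1 - p) ^ (Fintype.card ι - Ω.card) else 0

/-- Skinny natural t-SVD of tubal rank `r`: `A = U ⋆ S ⋆ Vᴴ` with slice-wise orthonormal
columns for `U`, `V`, slice-wise diagonal `S` with nonnegative (real) diagonal entries,
and no zero tube on the diagonal of `S` (so `r` is exactly the tubal rank of `A`). -/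
structure IsSkinnyTSVD {n1 n2 n3 : ℕ} (A : Tensor n1 n2 n3) (r : ℕ)
    (U : Tensor n1 r n3) (S : Tensor r r n3) (V : Tensor n2 r n3) : Prop where
  factor : A = tprod U (tprod S (hconj V))
  U_orth : ∀ k : Fin n3, (slice U k)ᴴ * slice U k = 1
  V_orth : ∀ k : Fin n3, (slice V k)ᴴ * slice V k = 1
  S_diag : ∀ (k : Fin n3) (i j : Fin r), i ≠ j → S i j k = 0
  S_real_nonneg : ∀ (k : Fin n3) (i : Fin r), (S i i k).im = 0 ∧ 0 ≤ (S i i k).re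
  tubes_ne : ∀ i : Fin r, ∃ k : Fin n3, S i i k ≠ 0

/-- Full natural t-SVD: `A = U ⋆ S ⋆ Vᴴ` with slice-wise unitary `U`, `V` and slice-wise
diagonal `S` with nonnegative (real) diagonal entries. -/
structure IsFullTSVD {n1 n2 n3 : ℕ} (A : Tensor n1 n2 n3)
    (U : Tensor n1 n1 n3) (S : Tensor n1 n2 n3) (V : Tensor n2 n2 n3) : Prop where
  factor : A = tprod U (tprod S (hconj V))
  U_unitary : ∀ k : Fin n3, (slice U k)ᴴ * slice U k = 1
  V_unitary : ∀ k : Fin n3, (slice V k)ᴴ * slice V k = 1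
  S_diag : ∀ (k : Fin n3) (i : Fin n1) (j : Fin n2), (i : ℕ) ≠ (j : ℕ) → S i j k = 0
  S_real_nonneg : ∀ (k : Fin n3) (i : Fin n1) (j : Fin n2), (i : ℕ) = (j : ℕ) →
    (S i j k).im = 0 ∧ 0 ≤ (S i j k).re

/-- `(S - τ)₊`: replace every diagonal entry `s` of each frontal slice by `max (s - τ) 0`. -/
noncomputable def shrink {n1 n2 n3 : ℕ} (τ : ℝ) (S : Tensor n1 n2 n3) : Tensor n1 n2 n3 :=
  fun i j k => if (i : ℕ) = (j : ℕ) then ((max ((S i j k).re - τ) 0 : ℝ) : ℂ) else S i j k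

/-- The projection `P_S` onto the tangent subspace spanned by the singular tensors. -/
noncomputable def PS {n1 n2 n3 r : ℕ} (U : Tensor n1 r n3) (V : Tensor n2 r n3) (Z : Tensor n1 n2 n3) :
    Tensor n1 n2 n3 :=
  tprod U (tprod (hconj U) Z) + tprod Z (tprod V (hconj V))
    - tprod U (tprod (hconj U) (tprod Z (tprod V (hconj V))))

/-- The complementary projection `P_{S⊥}`. -/
noncomputable def PSperp {n1 n2 n3 r : ℕ} (U : Tensor n1 r n3) (V : Tensor n2 r n3) (Z : Tensor n1 n2 n3) :
    Tensor n1 n2 n3 :=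
  Z - PS U V Z

/-- Operator norm of a map between tensor spaces, with respect to Frobenius norms. -/
noncomputable def opNormT {a b c d e f : ℕ} (L : Tensor a b c → Tensor d e f) : ℝ :=
  sSup {x : ℝ | ∃ Z : Tensor a b c, frobNorm Z ≤ 1 ∧ x = frobNorm (L Z)}

/-- Tensor column basis `ξ_i ∈ ℂ^{n×1×m}`. -/
noncomputable def xiB (n m : ℕ) (i : Fin n) : Tensor n 1 m := fun a _ _ => if a = i then 1 else 0

/-- Tensor frontal-slice basis `ζ_k ∈ ℂ^{1×1×n}`. -/
noncomputable def zetaB (n : ℕ) (k : Fin n) : Tensor 1 1 n := fun _ _ c => if c = k then 1 else 0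

/-- Standard inner product of tensors. -/
noncomputable def tinner {n1 n2 n3 : ℕ} (A B : Tensor n1 n2 n3) : ℂ :=
  ∑ i, ∑ j, ∑ k, (starRingEnd ℂ) (A i j k) * B i j k

/-- Standard basis tensor `e_{ijk}`. -/
noncomputable def eBasis (n1 n2 n3 : ℕ) (i : Fin n1) (j : Fin n2) (k : Fin n3) : Tensor n1 n2 n3 :=
  fun a b c => if a = i ∧ b = j ∧ c = k then 1 else 0

/-- `X` is the unique optimal solution of:
minimize `‖T(X̂)‖_*` subject to `S_Ω(X̂) = S_Ω(X)`. -/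
def UniqueSolution {n1 n2 n3 N3 : ℕ} (T : Matrix (Fin N3) (Fin n3) ℂ) (X : Tensor n1 n2 n3)
    (Ω : Finset (Fin n1 × Fin n2 × Fin n3)) : Prop :=
  ∀ Y : Tensor n1 n2 n3, sampleOp Ω Y = sampleOp Ω X → Y ≠ X →
    tNucNorm (mode3 T X) < tNucNorm (mode3 T Y)

/-- The tensor incoherence conditions with parameters `μ, ν`. -/
structure Incoherent {n1 n2 n3 N3 r : ℕ} (T : Matrix (Fin N3) (Fin n3) ℂ)
    (U : Tensor n1 r N3) (V : Tensor n2 r N3) (μ ν : ℝ) : Prop where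
  hU : ∀ i : Fin n1,
    frobNorm (tprod (hconj U) (xiB n1 N3 i)) ≤ Real.sqrt (μ * r * N3 / n1)
  hV : ∀ j : Fin n2,
    frobNorm (tprod (hconj V) (xiB n2 N3 j)) ≤ Real.sqrt (μ * r * N3 / n2)
  hUT : ∀ (i : Fin n1) (k : Fin n3),
    frobNorm (tprod (tprod (hconj U) (xiB n1 N3 i)) (mode3 T (zetaB n3 k)))
      ≤ Real.sqrt (ν * r / n1) * col2Norm T
  hVT : ∀ (j : Fin n2) (k : Fin n3),
    frobNorm (tprod (tprod (hconj V) (xiB n2 N3 j)) (mode3 T (zetaB n3 k)))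
      ≤ Real.sqrt (ν * r / n2) * col2Norm T

/-- The operator `P_S T R_Ω T† P_S − P_S T T† P_S` on `ℂ^{n1×n2×N3}`, `R_Ω = p⁻¹ S_Ω`. -/
noncomputable def isoOp {n1 n2 n3 N3 r : ℕ} (T : Matrix (Fin N3) (Fin n3) ℂ)
    (U : Tensor n1 r N3) (V : Tensor n2 r N3)
    (Ω : Finset (Fin n1 × Fin n2 × Fin n3)) (p : ℝ) :
    Tensor n1 n2 N3 → Tensor n1 n2 N3 :=
  fun Z =>
    PS U V (mode3 T ((p⁻¹ : ℝ) • sampleOp Ω (mode3 (pinv T) (PS U V Z))))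
      - PS U V (mode3 T (mode3 (pinv T) (PS U V Z)))

/-- The dual-certificate conditions (a) `(T T† − T S_Ω T†)ᴴ Y = 0` (the adjoint being
`T̃ Tᴴ − T̃ S_Ω Tᴴ` with `T̃ = (T†)ᴴ`), (b) `‖P_S(Y) − U ⋆ Vᴴ‖_F ≤ p/(8 κ(T))`, and
(c) `‖P_{S⊥}(Y)‖ ≤ 1/2` in tensor spectral norm. -/
def DualCert {n1 n2 n3 N3 r : ℕ} (T : Matrix (Fin N3) (Fin n3) ℂ)
    (U : Tensor n1 r N3) (V : Tensor n2 r N3)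
    (Ω : Finset (Fin n1 × Fin n2 × Fin n3)) (p : ℝ) (Y : Tensor n1 n2 N3) : Prop :=
  (mode3 (pinv T)ᴴ (mode3 Tᴴ Y) - mode3 (pinv T)ᴴ (sampleOp Ω (mode3 Tᴴ Y)) = 0) ∧
  frobNorm (PS U V Y - tprod U (hconj V)) ≤ p / (8 * kappa T) ∧
  tSpecNorm (PSperp U V Y) ≤ 1 / 2


section Aux

lemma specNormMat_nonneg {m n : ℕ} (M : Matrix (Fin m) (Fin n) ℂ) : 0 ≤ specNormMat M :=
  Real.iSup_nonneg fun _ => Real.sqrt_nonneg _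

lemma eig_le_sq {m n : ℕ} (M : Matrix (Fin m) (Fin n) ℂ) (i : Fin n) :
    (Matrix.isHermitian_conjTranspose_mul_self M).eigenvalues i ≤ specNormMat M ^ 2 := by
  have h0 := Matrix.eigenvalues_conjTranspose_mul_self_nonneg M i
  have h1 : singVals M i ≤ specNormMat M :=
    le_ciSup (Set.Finite.bddAbove (Set.finite_range _)) i
  calc (Matrix.isHermitian_conjTranspose_mul_self M).eigenvalues i
      = singVals M i ^ 2 := (Real.sq_sqrt h0).symm
    _ ≤ specNormMat M ^ 2 := pow_le_pow_left₀ (Real.sqrt_nonneg _) h1 2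

lemma re_conj_mul (z : ℂ) : ((starRingEnd ℂ) z * z).re = ‖z‖ ^ 2 := by
  rw [mul_comm, Complex.mul_conj]
  simp [Complex.sq_norm]

lemma re_star_dot {m : ℕ} (v : Fin m → ℂ) : (star v ⬝ᵥ v).re = ∑ k, ‖v k‖ ^ 2 := by
  rw [dotProduct, Complex.re_sum]
  exact Finset.sum_congr rfl fun k _ => re_conj_mul (v k)

lemma dot_re_le {n : ℕ} (a b : Fin n → ℂ) :
    (star a ⬝ᵥ b).re ≤ Real.sqrt (∑ i, ‖a i‖ ^ 2) * Real.sqrt (∑ i, ‖b i‖ ^ 2) := by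
  have h := norm_inner_le_norm (𝕜 := ℂ) ((WithLp.equiv 2 (Fin n → ℂ)).symm a)
    ((WithLp.equiv 2 (Fin n → ℂ)).symm b)
  rw [show inner ℂ ((WithLp.equiv 2 (Fin n → ℂ)).symm a) ((WithLp.equiv 2 (Fin n → ℂ)).symm b) = star a ⬝ᵥ b from (EuclideanSpace.inner_toLp_toLp a b).trans (dotProduct_comm _ _)] at h
  rw [EuclideanSpace.norm_eq, EuclideanSpace.norm_eq] at h
  calc (star a ⬝ᵥ b).re ≤ ‖star a ⬝ᵥ b‖ := Complex.re_le_norm _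
    _ ≤ _ := by convert h using 3 <;> rfl

lemma sum_sq_mulVec_le {N3 n3 : ℕ} (T : Matrix (Fin N3) (Fin n3) ℂ) (y : Fin n3 → ℂ) :
    ∑ k, ‖(T *ᵥ y) k‖ ^ 2 ≤ specNormMat T ^ 2 * ∑ s, ‖y s‖ ^ 2 := by
  classical
  set hA := Matrix.isHermitian_conjTranspose_mul_self T with hAdef
  set Uu : Matrix (Fin n3) (Fin n3) ℂ :=
    (hA.eigenvectorUnitary : Matrix (Fin n3) (Fin n3) ℂ) with hUdef
  set x : Fin n3 → ℂ := (star Uu) *ᵥ y with hx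
  have hUU : Uu * star Uu = 1 := (Matrix.mem_unitaryGroup_iff).mp hA.eigenvectorUnitary.2
  have key : ∀ (w : Fin n3 → ℂ), star y ⬝ᵥ (Uu *ᵥ w) = star x ⬝ᵥ w := by
    intro w
    rw [Matrix.dotProduct_mulVec]
    congr 1
    rw [hx, Matrix.star_mulVec, Matrix.star_eq_conjTranspose, Matrix.conjTranspose_conjTranspose]
  have e1 : ∑ k, ‖(T *ᵥ y) k‖ ^ 2 = (star y ⬝ᵥ ((Tᴴ * T) *ᵥ y)).re := by
    rw [← re_star_dot (T *ᵥ y)]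
    congr 1
    rw [Matrix.star_mulVec, ← Matrix.mulVec_mulVec, Matrix.dotProduct_mulVec]
    conv_rhs => rw [Matrix.dotProduct_mulVec, Matrix.dotProduct_mulVec]
  have e2 : star y ⬝ᵥ ((Tᴴ * T) *ᵥ y)
      = ∑ i, (hA.eigenvalues i : ℂ) * (starRingEnd ℂ (x i) * x i) := by
    conv_lhs => rw [show Tᴴ * T = Uu * Matrix.diagonal (Complex.ofReal ∘ hA.eigenvalues) * star Uu
      from hA.spectral_theorem]
    rw [← Matrix.mulVec_mulVec, ← Matrix.mulVec_mulVec, key, ← hx]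
    rw [dotProduct]
    refine Finset.sum_congr rfl fun i _ => ?_
    rw [Matrix.mulVec_diagonal]
    simp only [Pi.star_apply, Complex.star_def, Function.comp_apply]
    ring
  have e3 : ∑ i, ‖x i‖ ^ 2 = ∑ s, ‖y s‖ ^ 2 := by
    rw [← re_star_dot x, ← re_star_dot y]
    congr 1
    rw [hx, ← key ((star Uu) *ᵥ y), Matrix.mulVec_mulVec, hUU, Matrix.one_mulVec]
  rw [e1, e2, Complex.re_sum, ← e3]
  rw [Finset.mul_sum]
  refine Finset.sum_le_sum fun i _ => ?_
  have hre : ((hA.eigenvalues i : ℂ) * (starRingEnd ℂ (x i) * x i)).re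
      = hA.eigenvalues i * ‖x i‖ ^ 2 := by
    rw [mul_comm (starRingEnd ℂ (x i)), Complex.mul_conj]
    simp [Complex.sq_norm, ← Complex.ofReal_mul]
  rw [hre]
  have h1 := eig_le_sq T i
  have h2 : (0:ℝ) ≤ ‖x i‖ ^ 2 := by positivity
  nlinarith

lemma sum_sq_conjT_mulVec_le {N3 n3 : ℕ} (T : Matrix (Fin N3) (Fin n3) ℂ) (z : Fin N3 → ℂ) :
    ∑ k, ‖(Tᴴ *ᵥ z) k‖ ^ 2 ≤ specNormMat T ^ 2 * ∑ k, ‖z k‖ ^ 2 := by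
  have hσ : 0 ≤ specNormMat T := specNormMat_nonneg T
  set w : Fin n3 → ℂ := Tᴴ *ᵥ z with hw
  set W : ℝ := ∑ k, ‖w k‖ ^ 2 with hWdef
  set Z : ℝ := ∑ k, ‖z k‖ ^ 2 with hZdef
  have hW0 : 0 ≤ W := Finset.sum_nonneg fun k _ => by positivity
  have hZ0 : 0 ≤ Z := Finset.sum_nonneg fun k _ => by positivity
  have h1 : W = (star z ⬝ᵥ (T *ᵥ w)).re := by
    rw [hWdef, ← re_star_dot w]
    congr 1
    rw [hw, Matrix.star_mulVec, Matrix.conjTranspose_conjTranspose, Matrix.dotProduct_mulVec]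
    conv_rhs => rw [Matrix.dotProduct_mulVec, Matrix.dotProduct_mulVec]
  have h2 : (star z ⬝ᵥ (T *ᵥ w)).re ≤ Real.sqrt Z * Real.sqrt (∑ k, ‖(T *ᵥ w) k‖ ^ 2) :=
    dot_re_le z (T *ᵥ w)
  have h4 : Real.sqrt (∑ k, ‖(T *ᵥ w) k‖ ^ 2) ≤ specNormMat T * Real.sqrt W := by
    calc Real.sqrt (∑ k, ‖(T *ᵥ w) k‖ ^ 2) ≤ Real.sqrt (specNormMat T ^ 2 * W) :=
          Real.sqrt_le_sqrt (sum_sq_mulVec_le T w)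
      _ = specNormMat T * Real.sqrt W := by
          rw [Real.sqrt_mul (sq_nonneg _), Real.sqrt_sq hσ]
  have h5 : W ≤ Real.sqrt Z * (specNormMat T * Real.sqrt W) := by
    calc W = (star z ⬝ᵥ (T *ᵥ w)).re := h1
      _ ≤ Real.sqrt Z * Real.sqrt (∑ k, ‖(T *ᵥ w) k‖ ^ 2) := h2
      _ ≤ Real.sqrt Z * (specNormMat T * Real.sqrt W) :=
          mul_le_mul_of_nonneg_left h4 (Real.sqrt_nonneg _)
  nlinarith [Real.sq_sqrt hW0, Real.sq_sqrt hZ0, Real.sqrt_nonneg W, Real.sqrt_nonneg Z,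
    sq_nonneg (Real.sqrt W - specNormMat T * Real.sqrt Z)]

lemma row_energy {n1 n2 N3 r : ℕ} (U : Tensor n1 r N3) (V : Tensor n2 r N3)
    (hV : ∀ k : Fin N3, (slice V k)ᴴ * slice V k = 1) (i : Fin n1) :
    ∑ j, ∑ k, ‖tprod U (hconj V) i j k‖ ^ 2 = ∑ s, ∑ k, ‖U i s k‖ ^ 2 := by
  rw [Finset.sum_comm, Finset.sum_comm (γ := Fin r)]
  refine Finset.sum_congr rfl fun k _ => ?_
  have horth : ∀ s t : Fin r, ∑ j, V j s k * (starRingEnd ℂ) (V j t k)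
      = if s = t then 1 else 0 := by
    intro s t
    have h := congrFun (congrFun (hV k) s) t
    rw [Matrix.mul_apply] at h
    have h' : ∑ j, (starRingEnd ℂ) (V j s k) * V j t k = if s = t then 1 else 0 := by
      simpa [slice, Matrix.conjTranspose_apply, Matrix.one_apply] using h
    calc ∑ j, V j s k * (starRingEnd ℂ) (V j t k)
        = (starRingEnd ℂ) (∑ j, (starRingEnd ℂ) (V j s k) * V j t k) := by
          rw [map_sum]
          exact Finset.sum_congr rfl fun j _ => by simp [mul_comm]
      _ = if s = t then 1 else 0 := by rw [h']; split <;> simp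
  have key : ∑ j, (starRingEnd ℂ) (tprod U (hconj V) i j k) * tprod U (hconj V) i j k
      = ∑ s, (starRingEnd ℂ) (U i s k) * U i s k := by
    have e : ∀ j : Fin n2, (starRingEnd ℂ) (tprod U (hconj V) i j k) * tprod U (hconj V) i j k
        = ∑ s, ∑ t, ((starRingEnd ℂ) (U i s k) * U i t k)
            * (V j s k * (starRingEnd ℂ) (V j t k)) := by
      intro j
      simp only [tprod, hconj, _root_.map_sum, _root_.map_mul, RingHomCompTriple.comp_apply,
        RingHom.id_apply, Complex.conj_conj]
      rw [Finset.sum_mul_sum]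
      exact Finset.sum_congr rfl fun s _ => Finset.sum_congr rfl fun t _ => by ring
    rw [Finset.sum_congr rfl fun j _ => e j, Finset.sum_comm]
    refine Finset.sum_congr rfl fun s _ => ?_
    rw [Finset.sum_comm]
    calc ∑ t, ∑ j, ((starRingEnd ℂ) (U i s k) * U i t k)
            * (V j s k * (starRingEnd ℂ) (V j t k))
        = ∑ t, ((starRingEnd ℂ) (U i s k) * U i t k) * (if s = t then 1 else 0) := by
          refine Finset.sum_congr rfl fun t _ => ?_
          rw [← Finset.mul_sum, horth s t]
      _ = (starRingEnd ℂ) (U i s k) * U i s k := by simp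
  calc ∑ j, ‖tprod U (hconj V) i j k‖ ^ 2
      = (∑ j, (starRingEnd ℂ) (tprod U (hconj V) i j k) * tprod U (hconj V) i j k).re := by
        rw [Complex.re_sum]
        exact (Finset.sum_congr rfl fun j _ => (re_conj_mul _).symm)
    _ = (∑ s, (starRingEnd ℂ) (U i s k) * U i s k).re := by rw [key]
    _ = ∑ s, ‖U i s k‖ ^ 2 := by
        rw [Complex.re_sum]
        exact Finset.sum_congr rfl fun s _ => re_conj_mul _

lemma col_energy {n1 n2 N3 r : ℕ} (U : Tensor n1 r N3) (V : Tensor n2 r N3)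
    (hU : ∀ k : Fin N3, (slice U k)ᴴ * slice U k = 1) (j : Fin n2) :
    ∑ i, ∑ k, ‖tprod U (hconj V) i j k‖ ^ 2 = ∑ s, ∑ k, ‖V j s k‖ ^ 2 := by
  rw [Finset.sum_comm, Finset.sum_comm (γ := Fin r)]
  refine Finset.sum_congr rfl fun k _ => ?_
  have horth : ∀ s t : Fin r, ∑ i, (starRingEnd ℂ) (U i s k) * U i t k
      = if s = t then 1 else 0 := by
    intro s t
    have h := congrFun (congrFun (hU k) s) t
    rw [Matrix.mul_apply] at h
    simpa [slice, Matrix.conjTranspose_apply, Matrix.one_apply] using h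
  have key : ∑ i, (starRingEnd ℂ) (tprod U (hconj V) i j k) * tprod U (hconj V) i j k
      = ∑ s, V j s k * (starRingEnd ℂ) (V j s k) := by
    have e : ∀ i : Fin n1, (starRingEnd ℂ) (tprod U (hconj V) i j k) * tprod U (hconj V) i j k
        = ∑ s, ∑ t, (V j s k * (starRingEnd ℂ) (V j t k))
            * ((starRingEnd ℂ) (U i s k) * U i t k) := by
      intro i
      simp only [tprod, hconj, _root_.map_sum, _root_.map_mul, RingHomCompTriple.comp_apply,
        RingHom.id_apply, Complex.conj_conj]
      rw [Finset.sum_mul_sum]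
      exact Finset.sum_congr rfl fun s _ => Finset.sum_congr rfl fun t _ => by ring
    rw [Finset.sum_congr rfl fun i _ => e i, Finset.sum_comm]
    refine Finset.sum_congr rfl fun s _ => ?_
    rw [Finset.sum_comm]
    calc ∑ t, ∑ i, (V j s k * (starRingEnd ℂ) (V j t k))
            * ((starRingEnd ℂ) (U i s k) * U i t k)
        = ∑ t, (V j s k * (starRingEnd ℂ) (V j t k)) * (if s = t then 1 else 0) := by
          refine Finset.sum_congr rfl fun t _ => ?_
          rw [← Finset.mul_sum, horth s t]
      _ = V j s k * (starRingEnd ℂ) (V j s k) := by simp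
  calc ∑ i, ‖tprod U (hconj V) i j k‖ ^ 2
      = (∑ i, (starRingEnd ℂ) (tprod U (hconj V) i j k) * tprod U (hconj V) i j k).re := by
        rw [Complex.re_sum]
        exact (Finset.sum_congr rfl fun i _ => (re_conj_mul _).symm)
    _ = (∑ s, V j s k * (starRingEnd ℂ) (V j s k)).re := by rw [key]
    _ = ∑ s, ‖V j s k‖ ^ 2 := by
        rw [Complex.re_sum]
        refine Finset.sum_congr rfl fun s _ => ?_
        rw [mul_comm]
        exact re_conj_mul _

lemma frob_hconj_xi {n m r : ℕ} (U : Tensor n r m) (i : Fin n) :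
    frobNorm (tprod (hconj U) (xiB n m i)) = Real.sqrt (∑ s, ∑ k, ‖U i s k‖ ^ 2) := by
  unfold frobNorm
  congr 1
  refine Finset.sum_congr rfl fun s _ => ?_
  rw [Fin.sum_univ_one]
  refine Finset.sum_congr rfl fun k _ => ?_
  have : tprod (hconj U) (xiB n m i) s 0 k = (starRingEnd ℂ) (U i s k) := by
    simp [tprod, hconj, xiB]
  rw [this]
  simp

lemma sqrt_step (μ : ℝ) (r N3 : ℕ) (a b : ℝ) (ha : 0 < a) (hb : 0 < b) :
    Real.sqrt (μ * r * N3 / a) ≤ Real.sqrt (μ * r * (a + b) * N3 / (a * b)) := by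
  rcases le_or_gt 0 (μ * r * N3) with hc | hc
  · apply Real.sqrt_le_sqrt
    rw [div_le_div_iff₀ ha (by positivity)]
    nlinarith [mul_nonneg (mul_nonneg hc ha.le) ha.le]
  · have h0 : μ * r * N3 / a ≤ 0 := div_nonpos_of_nonpos_of_nonneg hc.le ha.le
    calc Real.sqrt (μ * r * N3 / a) ≤ Real.sqrt 0 := Real.sqrt_le_sqrt h0
      _ = 0 := Real.sqrt_zero
      _ ≤ _ := Real.sqrt_nonneg _

end Aux

/-- **(∞,2) norm bound of `Tᴴ(U ⋆ Vᴴ)` via the incoherence conditions.** -/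
theorem normInf2_TH_UVH_bound {n1 n2 n3 N3 r : ℕ}
    (X : Tensor n1 n2 n3) (T : Matrix (Fin N3) (Fin n3) ℂ)
    (U : Tensor n1 r N3) (S : Tensor r r N3) (V : Tensor n2 r N3) (μ : ℝ)
    (hT : FullColRank T) (hsvd : IsSkinnyTSVD (mode3 T X) r U S V)
    (hU : ∀ i : Fin n1,
      frobNorm (tprod (hconj U) (xiB n1 N3 i)) ≤ Real.sqrt (μ * r * N3 / n1))
    (hV : ∀ j : Fin n2,
      frobNorm (tprod (hconj V) (xiB n2 N3 j)) ≤ Real.sqrt (μ * r * N3 / n2)) :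
    normInf2 (mode3 Tᴴ (tprod U (hconj V))) ≤
      specNormMat T * Real.sqrt (μ * r * ((n1 : ℝ) + n2) * N3 / ((n1 : ℝ) * n2)) := by
  classical
  set W : Tensor n1 n2 N3 := tprod U (hconj V) with hW
  set σ : ℝ := specNormMat T with hσdef
  have hσ : 0 ≤ σ := specNormMat_nonneg T
  set b : ℝ := μ * r * ((n1 : ℝ) + n2) * N3 / ((n1 : ℝ) * n2) with hbdef
  have hrhs : 0 ≤ σ * Real.sqrt b := mul_nonneg hσ (Real.sqrt_nonneg _)
  have hfiber : ∀ (i : Fin n1) (j : Fin n2),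
      (fun k => mode3 Tᴴ W i j k) = Tᴴ *ᵥ (fun s => W i j s) := by
    intro i j; funext k; rfl
  have hstep : ∀ (i : Fin n1) (j : Fin n2),
      ∑ k, ‖mode3 Tᴴ W i j k‖ ^ 2 ≤ σ ^ 2 * ∑ k, ‖W i j k‖ ^ 2 := by
    intro i j
    have h := sum_sq_conjT_mulVec_le T (fun s => W i j s)
    rw [← hfiber i j] at h
    exact h
  refine max_le (Real.iSup_le (fun j => ?_) hrhs) (Real.iSup_le (fun i => ?_) hrhs)
  · -- column bound
    by_cases h1 : n1 = 0
    · have : (Finset.univ : Finset (Fin n1)) = ∅ := by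
        have : IsEmpty (Fin n1) := by rw [h1]; infer_instance
        exact Finset.univ_eq_empty
      simp [this]
      exact hrhs
    · have hn1 : (0:ℝ) < n1 := by exact_mod_cast Nat.pos_of_ne_zero h1
      have hn2 : (0:ℝ) < n2 := by
        have : n2 ≠ 0 := fun h => (by rw [h] at j; exact j.elim0)
        exact_mod_cast Nat.pos_of_ne_zero this
      have hA : ∑ i, ∑ k, ‖W i j k‖ ^ 2 = ∑ s, ∑ k, ‖V j s k‖ ^ 2 :=
        col_energy U V hsvd.U_orth j
      have hVj : Real.sqrt (∑ s, ∑ k, ‖V j s k‖ ^ 2) ≤ Real.sqrt (μ * r * N3 / n2) := by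
        rw [← frob_hconj_xi V j]; exact hV j
      calc Real.sqrt (∑ i, ∑ k, ‖mode3 Tᴴ W i j k‖ ^ 2)
          ≤ Real.sqrt (σ ^ 2 * ∑ i, ∑ k, ‖W i j k‖ ^ 2) := by
            apply Real.sqrt_le_sqrt
            rw [Finset.mul_sum]
            exact Finset.sum_le_sum fun i _ => hstep i j
        _ = σ * Real.sqrt (∑ i, ∑ k, ‖W i j k‖ ^ 2) := by
            rw [Real.sqrt_mul (sq_nonneg _), Real.sqrt_sq hσ]
        _ ≤ σ * Real.sqrt b := by
            apply mul_le_mul_of_nonneg_left _ hσ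
            rw [hA]
            refine le_trans hVj ?_
            have h := sqrt_step μ r N3 (n2 : ℝ) (n1 : ℝ) hn2 hn1
            rw [show μ * r * ((n2:ℝ) + n1) * N3 / ((n2:ℝ) * n1) = b by rw [hbdef]; ring_nf] at h
            exact h
  · -- row bound
    by_cases h2 : n2 = 0
    · have : (Finset.univ : Finset (Fin n2)) = ∅ := by
        have : IsEmpty (Fin n2) := by rw [h2]; infer_instance
        exact Finset.univ_eq_empty
      simp [this]
      exact hrhs
    · have hn2 : (0:ℝ) < n2 := by exact_mod_cast Nat.pos_of_ne_zero h2
      have hn1 : (0:ℝ) < n1 := by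
        have : n1 ≠ 0 := fun h => (by rw [h] at i; exact i.elim0)
        exact_mod_cast Nat.pos_of_ne_zero this
      have hA : ∑ j, ∑ k, ‖W i j k‖ ^ 2 = ∑ s, ∑ k, ‖U i s k‖ ^ 2 :=
        row_energy U V hsvd.V_orth i
      have hUi : Real.sqrt (∑ s, ∑ k, ‖U i s k‖ ^ 2) ≤ Real.sqrt (μ * r * N3 / n1) := by
        rw [← frob_hconj_xi U i]; exact hU i
      calc Real.sqrt (∑ j, ∑ k, ‖mode3 Tᴴ W i j k‖ ^ 2)
          ≤ Real.sqrt (σ ^ 2 * ∑ j, ∑ k, ‖W i j k‖ ^ 2) := by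
            apply Real.sqrt_le_sqrt
            rw [Finset.mul_sum]
            exact Finset.sum_le_sum fun j _ => hstep i j
        _ = σ * Real.sqrt (∑ j, ∑ k, ‖W i j k‖ ^ 2) := by
            rw [Real.sqrt_mul (sq_nonneg _), Real.sqrt_sq hσ]
        _ ≤ σ * Real.sqrt b := by
            apply mul_le_mul_of_nonneg_left _ hσ
            rw [hA]
            refine le_trans hUi ?_
            have h := sqrt_step μ r N3 (n1 : ℝ) (n2 : ℝ) hn1 hn2
            rw [show μ * r * ((n1:ℝ) + n2) * N3 / ((n1:ℝ) * n2) = b from rfl] at h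
            exact h


end TC
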